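/- Let X be a complex Banach space and f : 𝔻 → X holomorphic with f(0) = 0 such that there exist a complex Hilbert space H, a holomorphic g : 𝔻 → H with g(0) = 0 and ρ_B(g) < ∞, and a bounded linear T : H → X with f = T ∘ g. Then for all n, m ∈ ℕ, λ_i ∈ ℂ, z_i ∈ 𝔻 (1 ≤ i ≤ n), μ_j ∈ ℂ, w_j ∈ 𝔻 (1 ≤ j ≤ m) with (λ_i, z_i) ≺ (μ_j, w_j): ∑_{i=1}^n |λ_i|²‖f'(z_i)‖² ≤ ‖T‖²·ρ_B(g)² · ∑_{j=1}^m |μ_j|²/(1 - |w_j|²)². -/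

import Mathlib

open Complex Metric Set

noncomputable def blochSeminorm {E : Type*} [NormedAddCommGroup E] [NormedSpace ℂ E]
    (f : ℂ → E) : ℝ :=
  ⨆ z : ball (0 : ℂ) 1, (1 - ‖(z : ℂ)‖ ^ 2) * ‖deriv f (z : ℂ)‖

lemma parseval_aux18 {H : Type*} [NormedAddCommGroup H] [InnerProductSpace ℂ H]
    (K : Submodule ℂ H) [FiniteDimensional ℂ K] (x : H) (hx : x ∈ K) :
    ‖x‖ ^ 2 = ∑ k, ‖(inner ℂ ((stdOrthonormalBasis ℂ K) k : H) x : ℂ)‖ ^ 2 := by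
  set b := stdOrthonormalBasis ℂ K
  have hx1 : ‖x‖ = ‖(⟨x, hx⟩ : K)‖ := rfl
  have h1 : ‖(⟨x, hx⟩ : K)‖ = ‖b.repr ⟨x, hx⟩‖ := (b.repr.norm_map _).symm
  have h2 : ‖b.repr ⟨x, hx⟩‖ ^ 2 = ∑ k, ‖b.repr ⟨x, hx⟩ k‖ ^ 2 := by
    rw [EuclideanSpace.norm_eq, Real.sq_sqrt]
    positivity
  rw [hx1, h1, h2]
  refine Finset.sum_congr rfl fun k _ => ?_
  rw [b.repr_apply_apply]
  rfl

theorem stmt18 {X H : Type*} [NormedAddCommGroup X] [NormedSpace ℂ X] [CompleteSpace X]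
    [NormedAddCommGroup H] [InnerProductSpace ℂ H] [CompleteSpace H]
    (f : ℂ → X) (hf0 : f 0 = 0) (hf : DifferentiableOn ℂ f (ball (0 : ℂ) 1))
    (g : ℂ → H) (hg : DifferentiableOn ℂ g (ball (0 : ℂ) 1)) (hg0 : g 0 = 0)
    (hgb : ∃ M, ∀ z ∈ ball (0 : ℂ) 1, (1 - ‖z‖ ^ 2) * ‖deriv g z‖ ≤ M)
    (T : H →L[ℂ] X) (hfact : ∀ z ∈ ball (0 : ℂ) 1, T (g z) = f z)
    (n m : ℕ) (lam : Fin n → ℂ) (zs : Fin n → ℂ) (hzs : ∀ i, zs i ∈ ball (0 : ℂ) 1)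
    (mu : Fin m → ℂ) (ws : Fin m → ℂ) (hws : ∀ j, ws j ∈ ball (0 : ℂ) 1)
    (hdom : ∀ h : ℂ → ℂ, DifferentiableOn ℂ h (ball (0 : ℂ) 1) → h 0 = 0 →
      (∃ M, ∀ z ∈ ball (0 : ℂ) 1, (1 - ‖z‖ ^ 2) * ‖deriv h z‖ ≤ M) →
      ∑ i, ‖lam i‖ ^ 2 * ‖deriv h (zs i)‖ ^ 2 ≤ ∑ j, ‖mu j‖ ^ 2 * ‖deriv h (ws j)‖ ^ 2) :
    ∑ i, ‖lam i‖ ^ 2 * ‖deriv f (zs i)‖ ^ 2 ≤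
      ‖T‖ ^ 2 * blochSeminorm g ^ 2 * ∑ j, ‖mu j‖ ^ 2 / (1 - ‖ws j‖ ^ 2) ^ 2 := by
  obtain ⟨M, hM⟩ := hgb
  set ρ := blochSeminorm g with hρdef
  -- basic facts about ρ
  have h01 : (0 : ℂ) ∈ ball (0 : ℂ) 1 := by simp
  have hbdd : BddAbove (Set.range fun z : ball (0 : ℂ) 1 =>
      (1 - ‖(z : ℂ)‖ ^ 2) * ‖deriv g (z : ℂ)‖) := by
    refine ⟨M, ?_⟩
    rintro x ⟨z, rfl⟩
    exact hM z z.2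
  have hρle : ∀ z ∈ ball (0 : ℂ) 1, (1 - ‖z‖ ^ 2) * ‖deriv g z‖ ≤ ρ := by
    intro z hz
    exact le_ciSup hbdd ⟨z, hz⟩
  have hρ0 : 0 ≤ ρ := by
    have := hρle 0 h01
    simp at this
    nlinarith [norm_nonneg (deriv g 0)]
  -- derivative of f
  have hgd : ∀ z ∈ ball (0 : ℂ) 1, HasDerivAt g (deriv g z) z := fun z hz =>
    (hg.differentiableAt (isOpen_ball.mem_nhds hz)).hasDerivAt
  have hderf : ∀ z ∈ ball (0 : ℂ) 1, deriv f z = T (deriv g z) := by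
    intro z hz
    have h1 : HasDerivAt (fun w => T (g w)) (T (deriv g z)) z :=
      T.hasFDerivAt.comp_hasDerivAt z (hgd z hz)
    have heq : f =ᶠ[nhds z] fun w => T (g w) := by
      filter_upwards [isOpen_ball.mem_nhds hz] with w hw using (hfact w hw).symm
    rw [heq.deriv_eq]
    exact h1.deriv
  -- derivative of inner functionals
  have hderh : ∀ (e : H), ∀ z ∈ ball (0 : ℂ) 1,
      HasDerivAt (fun w => (inner ℂ e (g w) : ℂ)) (inner ℂ e (deriv g z)) z := by
    intro e z hz
    exact (innerSL ℂ e).hasFDerivAt.comp_hasDerivAt z (hgd z hz)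
  -- the key middle inequality
  set K : Submodule ℂ H := Submodule.span ℂ
    ((Set.range fun i => deriv g (zs i)) ∪ (Set.range fun j => deriv g (ws j))) with hK
  haveI : FiniteDimensional ℂ K :=
    FiniteDimensional.span_of_finite ℂ ((Set.finite_range _).union (Set.finite_range _))
  set b := stdOrthonormalBasis ℂ K with hb
  have hmemz : ∀ i, deriv g (zs i) ∈ K := fun i =>
    Submodule.subset_span (Or.inl ⟨i, rfl⟩)
  have hmemw : ∀ j, deriv g (ws j) ∈ K := fun j =>
    Submodule.subset_span (Or.inr ⟨j, rfl⟩)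
  have hkineq : ∀ k, ∑ i, ‖lam i‖ ^ 2 * ‖(inner ℂ ((b k : H)) (deriv g (zs i)) : ℂ)‖ ^ 2 ≤
      ∑ j, ‖mu j‖ ^ 2 * ‖(inner ℂ ((b k : H)) (deriv g (ws j)) : ℂ)‖ ^ 2 := by
    intro k
    set e : H := (b k : H) with he
    have hek : ‖e‖ = 1 := by
      rw [he]; exact b.orthonormal.1 k
    set h : ℂ → ℂ := fun w => (inner ℂ e (g w) : ℂ) with hh
    have hhd : DifferentiableOn ℂ h (ball (0 : ℂ) 1) :=
      (innerSL ℂ e).differentiable.comp_differentiableOn hg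
    have hh0 : h 0 = 0 := by simp [hh, hg0]
    have hhder : ∀ z ∈ ball (0 : ℂ) 1, deriv h z = inner ℂ e (deriv g z) := fun z hz =>
      (hderh e z hz).deriv
    have hhb : ∃ M, ∀ z ∈ ball (0 : ℂ) 1, (1 - ‖z‖ ^ 2) * ‖deriv h z‖ ≤ M := by
      refine ⟨M, fun z hz => ?_⟩
      rw [hhder z hz]
      have h1 : ‖(inner ℂ e (deriv g z) : ℂ)‖ ≤ ‖deriv g z‖ := by
        calc ‖(inner ℂ e (deriv g z) : ℂ)‖ ≤ ‖e‖ * ‖deriv g z‖ := norm_inner_le_norm _ _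
        _ = ‖deriv g z‖ := by rw [hek, one_mul]
      have h2 : 0 ≤ 1 - ‖z‖ ^ 2 := by
        have : ‖z‖ < 1 := by simpa using hz
        nlinarith [norm_nonneg z]
      calc (1 - ‖z‖ ^ 2) * ‖(inner ℂ e (deriv g z) : ℂ)‖
          ≤ (1 - ‖z‖ ^ 2) * ‖deriv g z‖ := mul_le_mul_of_nonneg_left h1 h2
        _ ≤ M := hM z hz
    have := hdom h hhd hh0 hhb
    calc ∑ i, ‖lam i‖ ^ 2 * ‖(inner ℂ e (deriv g (zs i)) : ℂ)‖ ^ 2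
        = ∑ i, ‖lam i‖ ^ 2 * ‖deriv h (zs i)‖ ^ 2 := by
          refine Finset.sum_congr rfl fun i _ => ?_
          rw [hhder (zs i) (hzs i)]
      _ ≤ ∑ j, ‖mu j‖ ^ 2 * ‖deriv h (ws j)‖ ^ 2 := this
      _ = ∑ j, ‖mu j‖ ^ 2 * ‖(inner ℂ e (deriv g (ws j)) : ℂ)‖ ^ 2 := by
          refine Finset.sum_congr rfl fun j _ => ?_
          rw [hhder (ws j) (hws j)]
  have key : ∑ i, ‖lam i‖ ^ 2 * ‖deriv g (zs i)‖ ^ 2 ≤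
      ∑ j, ‖mu j‖ ^ 2 * ‖deriv g (ws j)‖ ^ 2 := by
    calc ∑ i, ‖lam i‖ ^ 2 * ‖deriv g (zs i)‖ ^ 2
        = ∑ i, ∑ k, ‖lam i‖ ^ 2 * ‖(inner ℂ ((b k : H)) (deriv g (zs i)) : ℂ)‖ ^ 2 := by
          refine Finset.sum_congr rfl fun i _ => ?_
          rw [parseval_aux18 K _ (hmemz i), Finset.mul_sum]
      _ = ∑ k, ∑ i, ‖lam i‖ ^ 2 * ‖(inner ℂ ((b k : H)) (deriv g (zs i)) : ℂ)‖ ^ 2 :=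
          Finset.sum_comm
      _ ≤ ∑ k, ∑ j, ‖mu j‖ ^ 2 * ‖(inner ℂ ((b k : H)) (deriv g (ws j)) : ℂ)‖ ^ 2 :=
          Finset.sum_le_sum fun k _ => hkineq k
      _ = ∑ j, ∑ k, ‖mu j‖ ^ 2 * ‖(inner ℂ ((b k : H)) (deriv g (ws j)) : ℂ)‖ ^ 2 :=
          Finset.sum_comm
      _ = ∑ j, ‖mu j‖ ^ 2 * ‖deriv g (ws j)‖ ^ 2 := by
          refine Finset.sum_congr rfl fun j _ => ?_
          rw [parseval_aux18 K _ (hmemw j), Finset.mul_sum]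
  -- assemble
  have hTn : (0 : ℝ) ≤ ‖T‖ := norm_nonneg T
  calc ∑ i, ‖lam i‖ ^ 2 * ‖deriv f (zs i)‖ ^ 2
      ≤ ∑ i, ‖lam i‖ ^ 2 * (‖T‖ ^ 2 * ‖deriv g (zs i)‖ ^ 2) := by
        refine Finset.sum_le_sum fun i _ => ?_
        have h1 : ‖deriv f (zs i)‖ ≤ ‖T‖ * ‖deriv g (zs i)‖ := by
          rw [hderf (zs i) (hzs i)]
          exact T.le_opNorm _
        have h2 : ‖deriv f (zs i)‖ ^ 2 ≤ ‖T‖ ^ 2 * ‖deriv g (zs i)‖ ^ 2 := by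
          nlinarith [norm_nonneg (deriv f (zs i)), norm_nonneg (deriv g (zs i))]
        exact mul_le_mul_of_nonneg_left h2 (by positivity)
    _ = ‖T‖ ^ 2 * ∑ i, ‖lam i‖ ^ 2 * ‖deriv g (zs i)‖ ^ 2 := by
        rw [Finset.mul_sum]; refine Finset.sum_congr rfl fun i _ => by ring
    _ ≤ ‖T‖ ^ 2 * ∑ j, ‖mu j‖ ^ 2 * ‖deriv g (ws j)‖ ^ 2 :=
        mul_le_mul_of_nonneg_left key (by positivity)
    _ ≤ ‖T‖ ^ 2 * ∑ j, ‖mu j‖ ^ 2 * (ρ ^ 2 / (1 - ‖ws j‖ ^ 2) ^ 2) := by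
        refine mul_le_mul_of_nonneg_left (Finset.sum_le_sum fun j _ => ?_) (by positivity)
        have hwj : ‖ws j‖ < 1 := by simpa using hws j
        have hpos : 0 < 1 - ‖ws j‖ ^ 2 := by nlinarith [norm_nonneg (ws j)]
        have h1 : ‖deriv g (ws j)‖ ≤ ρ / (1 - ‖ws j‖ ^ 2) := by
          rw [le_div_iff₀ hpos, mul_comm]
          exact hρle (ws j) (hws j)
        have h2 : ‖deriv g (ws j)‖ ^ 2 ≤ ρ ^ 2 / (1 - ‖ws j‖ ^ 2) ^ 2 := by
          have h2' : ‖deriv g (ws j)‖ ^ 2 ≤ (ρ / (1 - ‖ws j‖ ^ 2)) ^ 2 :=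
            pow_le_pow_left₀ (norm_nonneg _) h1 2
          rwa [div_pow] at h2'
        exact mul_le_mul_of_nonneg_left h2 (by positivity)
    _ = ‖T‖ ^ 2 * ρ ^ 2 * ∑ j, ‖mu j‖ ^ 2 / (1 - ‖ws j‖ ^ 2) ^ 2 := by
        simp only [Finset.mul_sum]
        exact Finset.sum_congr rfl fun j _ => by ring
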